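/- At every point (t, Θ) where λ_1^2 cos^2 t + λ_2^2 sin^2 t > 0, the map Σ satisfies the Takahashi equation Σ_{a,b} ∂_a( √det g · g^{ab} ∂_b Σ ) = −2 √det g · Σ, where g is the metric induced by Σ in the coordinates (t, Θ). By Takahashi's theorem, Σ parameterizes a minimal surface in 𝕊^3 ⊂ ℝ^4 (Lawson's ruled minimal surface). (Example 3.6, the case (L, N) = (2, 0).) -/

import Mathlib

open scoped BigOperators

/-- Partial derivative of `f` in the `i`-th coordinate direction. -/
noncomputable def pd {ι : Type*} [Fintype ι] [DecidableEq ι]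
    {F : Type*} [NormedAddCommGroup F] [NormedSpace ℝ F]
    (i : ι) (f : EuclideanSpace ℝ ι → F) (u : EuclideanSpace ℝ ι) : F :=
  fderiv ℝ f u (EuclideanSpace.single i 1)

noncomputable def vmk (v : Fin 4 → ℝ) : EuclideanSpace ℝ (Fin 4) :=
  ∑ i, v i • EuclideanSpace.single i 1

lemma vmk_apply (v : Fin 4 → ℝ) (j : Fin 4) : vmk v j = v j := by
  simp [vmk, EuclideanSpace.single_apply, Fin.sum_univ_four]
  fin_cases j <;> simp

lemma hasFDerivAt_sep {φ ψ : ℝ → ℝ} {φ' ψ' : ℝ} (q : EuclideanSpace ℝ (Fin 2))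
    (hφ : HasDerivAt φ φ' (q 0)) (hψ : HasDerivAt ψ ψ' (q 1)) :
    HasFDerivAt (fun p : EuclideanSpace ℝ (Fin 2) => φ (p 0) * ψ (p 1))
      ((φ' * ψ (q 1)) • (EuclideanSpace.proj (𝕜 := ℝ) (0:Fin 2) : EuclideanSpace ℝ (Fin 2) →L[ℝ] ℝ)
        + (φ (q 0) * ψ') • (EuclideanSpace.proj (𝕜 := ℝ) (1:Fin 2) : EuclideanSpace ℝ (Fin 2) →L[ℝ] ℝ)) q := by
  have hp0 : HasFDerivAt (fun p : EuclideanSpace ℝ (Fin 2) => p 0)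
      (EuclideanSpace.proj (𝕜 := ℝ) (0:Fin 2) : EuclideanSpace ℝ (Fin 2) →L[ℝ] ℝ) q :=
    by simpa only [show ⇑(EuclideanSpace.proj (𝕜 := ℝ) (0:Fin 2)) = fun p : EuclideanSpace ℝ (Fin 2) => p 0
        from funext fun p => PiLp.proj_apply 2 (fun _ : Fin 2 => ℝ) 0 p]
      using (EuclideanSpace.proj (𝕜 := ℝ) (0:Fin 2)).hasFDerivAt
  have hp1 : HasFDerivAt (fun p : EuclideanSpace ℝ (Fin 2) => p 1)
      (EuclideanSpace.proj (𝕜 := ℝ) (1:Fin 2) : EuclideanSpace ℝ (Fin 2) →L[ℝ] ℝ) q :=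
    by simpa only [show ⇑(EuclideanSpace.proj (𝕜 := ℝ) (1:Fin 2)) = fun p : EuclideanSpace ℝ (Fin 2) => p 1
        from funext fun p => PiLp.proj_apply 2 (fun _ : Fin 2 => ℝ) 1 p]
      using (EuclideanSpace.proj (𝕜 := ℝ) (1:Fin 2)).hasFDerivAt
  have h1 : HasFDerivAt (fun p : EuclideanSpace ℝ (Fin 2) => φ (p 0))
      (φ' • (EuclideanSpace.proj (𝕜 := ℝ) (0:Fin 2) : EuclideanSpace ℝ (Fin 2) →L[ℝ] ℝ)) q :=
    hφ.comp_hasFDerivAt q hp0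
  have h2 : HasFDerivAt (fun p : EuclideanSpace ℝ (Fin 2) => ψ (p 1))
      (ψ' • (EuclideanSpace.proj (𝕜 := ℝ) (1:Fin 2) : EuclideanSpace ℝ (Fin 2) →L[ℝ] ℝ)) q :=
    hψ.comp_hasFDerivAt q hp1
  have := h1.fun_mul h2
  refine this.congr_fderiv ?_
  ext v
  simp [PiLp.proj_apply]
  ring

lemma vmk_hasFDerivAt {v : EuclideanSpace ℝ (Fin 2) → Fin 4 → ℝ}
    {v' : Fin 4 → (EuclideanSpace ℝ (Fin 2) →L[ℝ] ℝ)} {q : EuclideanSpace ℝ (Fin 2)}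
    (h : ∀ i, HasFDerivAt (fun p => v p i) (v' i) q) :
    HasFDerivAt (fun p => vmk (v p))
      (∑ i, (v' i).smulRight (EuclideanSpace.single i 1)) q := by
  have : (fun p => vmk (v p)) = fun p => ∑ i, (fun p' => (v p' i) • EuclideanSpace.single i (1:ℝ)) p := by
    funext p; simp [vmk]
  rw [this]
  exact HasFDerivAt.fun_sum fun i _ => (h i).smul_const _

lemma pd_vmk {v : EuclideanSpace ℝ (Fin 2) → Fin 4 → ℝ} {q : EuclideanSpace ℝ (Fin 2)}
    {d : Fin 4 → ℝ} (a : Fin 2)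
    (h : ∀ i, ∃ v' : EuclideanSpace ℝ (Fin 2) →L[ℝ] ℝ,
        HasFDerivAt (fun p => v p i) v' q ∧ v' (EuclideanSpace.single a 1) = d i) :
    pd a (fun p => vmk (v p)) q = vmk d := by
  choose v' hv' hval using h
  rw [pd, (vmk_hasFDerivAt hv').fderiv]
  simp only [ContinuousLinearMap.sum_apply, ContinuousLinearMap.smulRight_apply]
  unfold vmk
  congr 1; funext i; rw [hval]

lemma pd_congr {F : Type*} [NormedAddCommGroup F] [NormedSpace ℝ F]
    {f h : EuclideanSpace ℝ (Fin 2) → F} {q : EuclideanSpace ℝ (Fin 2)}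
    (he : f =ᶠ[nhds q] h) (a : Fin 2) : pd a f q = pd a h q := by
  unfold pd; rw [he.fderiv_eq]

lemma pd_zero (a : Fin 2) (q : EuclideanSpace ℝ (Fin 2)) :
    pd a (fun _ => (0 : EuclideanSpace ℝ (Fin 4))) q = 0 := by
  unfold pd; rw [fderiv_fun_const]; simp

/-- One-variable derivative helpers -/
lemma hd_cosl (l x : ℝ) : HasDerivAt (fun y => Real.cos (l * y)) (-(l * Real.sin (l * x))) x := by
  have := (Real.hasDerivAt_cos (l * x)).comp x ((hasDerivAt_id x).const_mul l)
  simpa [mul_comm, Function.comp_def] using this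

lemma hd_sinl (l x : ℝ) : HasDerivAt (fun y => Real.sin (l * y)) (l * Real.cos (l * x)) x := by
  have := (Real.hasDerivAt_sin (l * x)).comp x ((hasDerivAt_id x).const_mul l)
  simpa [mul_comm, Function.comp_def] using this

noncomputable def w1 (l1 l2 x : ℝ) : ℝ := l1 ^ 2 * Real.cos x ^ 2 + l2 ^ 2 * Real.sin x ^ 2

lemma hd_w1 (l1 l2 x : ℝ) :
    HasDerivAt (w1 l1 l2) (2 * (l2 ^ 2 - l1 ^ 2) * Real.sin x * Real.cos x) x := by
  have := (((Real.hasDerivAt_cos x).pow 2).const_mul (l1 ^ 2)).add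
    (((Real.hasDerivAt_sin x).pow 2).const_mul (l2 ^ 2))
  refine this.congr_deriv ?_
  simp
  ring

noncomputable def sv (l1 l2 : ℝ) (q : EuclideanSpace ℝ (Fin 2)) : Fin 4 → ℝ :=
  ![Real.cos (q 0) * Real.cos (l1 * q 1), Real.cos (q 0) * Real.sin (l1 * q 1),
    Real.sin (q 0) * Real.cos (l2 * q 1), Real.sin (q 0) * Real.sin (l2 * q 1)]

noncomputable def Sf (l1 l2 : ℝ) (q : EuclideanSpace ℝ (Fin 2)) : EuclideanSpace ℝ (Fin 4) :=
  vmk (sv l1 l2 q)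

noncomputable def vt (l1 l2 : ℝ) (q : EuclideanSpace ℝ (Fin 2)) : Fin 4 → ℝ :=
  ![-Real.sin (q 0) * Real.cos (l1 * q 1), -Real.sin (q 0) * Real.sin (l1 * q 1),
    Real.cos (q 0) * Real.cos (l2 * q 1), Real.cos (q 0) * Real.sin (l2 * q 1)]

noncomputable def vh (l1 l2 : ℝ) (q : EuclideanSpace ℝ (Fin 2)) : Fin 4 → ℝ :=
  ![Real.cos (q 0) * -(l1 * Real.sin (l1 * q 1)), Real.cos (q 0) * (l1 * Real.cos (l1 * q 1)),
    Real.sin (q 0) * -(l2 * Real.sin (l2 * q 1)), Real.sin (q 0) * (l2 * Real.cos (l2 * q 1))]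

lemma pdSf0 (l1 l2 : ℝ) (q : EuclideanSpace ℝ (Fin 2)) :
    pd 0 (Sf l1 l2) q = vmk (vt l1 l2 q) := by
  apply pd_vmk
  intro i
  fin_cases i
  · exact ⟨_, hasFDerivAt_sep q (Real.hasDerivAt_cos _) (hd_cosl l1 _),
      by simp [EuclideanSpace.single_apply, PiLp.proj_apply, vt, sv]⟩
  · exact ⟨_, hasFDerivAt_sep q (Real.hasDerivAt_cos _) (hd_sinl l1 _),
      by simp [EuclideanSpace.single_apply, PiLp.proj_apply, vt, sv]⟩
  · exact ⟨_, hasFDerivAt_sep q (Real.hasDerivAt_sin _) (hd_cosl l2 _),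
      by simp [EuclideanSpace.single_apply, PiLp.proj_apply, vt, sv]⟩
  · exact ⟨_, hasFDerivAt_sep q (Real.hasDerivAt_sin _) (hd_sinl l2 _),
      by simp [EuclideanSpace.single_apply, PiLp.proj_apply, vt, sv]⟩

lemma pdSf1 (l1 l2 : ℝ) (q : EuclideanSpace ℝ (Fin 2)) :
    pd 1 (Sf l1 l2) q = vmk (vh l1 l2 q) := by
  apply pd_vmk
  intro i
  fin_cases i
  · exact ⟨_, hasFDerivAt_sep q (Real.hasDerivAt_cos _) (hd_cosl l1 _),
      by simp [EuclideanSpace.single_apply, PiLp.proj_apply, vh, sv]⟩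
  · exact ⟨_, hasFDerivAt_sep q (Real.hasDerivAt_cos _) (hd_sinl l1 _),
      by simp [EuclideanSpace.single_apply, PiLp.proj_apply, vh, sv]⟩
  · exact ⟨_, hasFDerivAt_sep q (Real.hasDerivAt_sin _) (hd_cosl l2 _),
      by simp [EuclideanSpace.single_apply, PiLp.proj_apply, vh, sv]⟩
  · exact ⟨_, hasFDerivAt_sep q (Real.hasDerivAt_sin _) (hd_sinl l2 _),
      by simp [EuclideanSpace.single_apply, PiLp.proj_apply, vh, sv]⟩

lemma inv2 (w : ℝ) (hw : w ≠ 0) :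
    (!![1, 0; 0, w] : Matrix (Fin 2) (Fin 2) ℝ)⁻¹ = !![1, 0; 0, w⁻¹] := by
  rw [Matrix.inv_def]
  ext a b
  fin_cases a <;> fin_cases b <;>
    simp [Matrix.adjugate_fin_two_of, Matrix.det_fin_two_of, Ring.inverse_eq_inv'] <;>
    field_simp

lemma metric_eq (lam1 lam2 : ℝ)
    (g : EuclideanSpace ℝ (Fin 2) → Matrix (Fin 2) (Fin 2) ℝ)
    (hg : ∀ q a b, g q a b = @inner ℝ _ _ (pd a (Sf lam1 lam2) q) (pd b (Sf lam1 lam2) q)) :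
    ∀ p, g p = !![1, 0; 0, w1 lam1 lam2 (p 0)] := by
  intro p
  have h1 := Real.sin_sq_add_cos_sq (lam1 * p 1)
  have h2 := Real.sin_sq_add_cos_sq (lam2 * p 1)
  have h0 := Real.sin_sq_add_cos_sq (p 0)
  have e00 : g p 0 0 = 1 := by
    rw [hg p, pdSf0]
    simp [vmk, PiLp.inner_apply, RCLike.inner_apply, EuclideanSpace.single_apply,
      Fin.sum_univ_four, vt, -inner_self_eq_norm_sq_to_K]
    linear_combination Real.sin (p 0) ^ 2 * h1 + Real.cos (p 0) ^ 2 * h2 + h0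
  have e01 : g p 0 1 = 0 := by
    rw [hg p, pdSf0, pdSf1]
    simp [vmk, PiLp.inner_apply, RCLike.inner_apply, EuclideanSpace.single_apply,
      Fin.sum_univ_four, vt, vh]
    ring
  have e10 : g p 1 0 = 0 := by
    rw [hg p, pdSf1, pdSf0]
    simp [vmk, PiLp.inner_apply, RCLike.inner_apply, EuclideanSpace.single_apply,
      Fin.sum_univ_four, vt, vh]
    ring
  have e11 : g p 1 1 = w1 lam1 lam2 (p 0) := by
    rw [hg p, pdSf1]
    simp [vmk, PiLp.inner_apply, RCLike.inner_apply, EuclideanSpace.single_apply,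
      Fin.sum_univ_four, vh, w1, -inner_self_eq_norm_sq_to_K]
    linear_combination (lam1 ^ 2 * Real.cos (p 0) ^ 2) * h1 + (lam2 ^ 2 * Real.sin (p 0) ^ 2) * h2
  ext a b
  fin_cases a <;> fin_cases b <;> simp [e00, e01, e10, e11]

set_option maxHeartbeats 1000000 in
/-- Example 3.6 (the case `(L, N) = (2, 0)`): the map
`Σ(t, Θ) = (cos t cos(λ₁Θ), cos t sin(λ₁Θ), sin t cos(λ₂Θ), sin t sin(λ₂Θ))`
into `𝕊³ ⊂ ℝ⁴` satisfies the Takahashi equation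
`Σ_{a,b} ∂_a(√det g ⋅ g^{ab} ∂_b Σ) = −2 √det g ⋅ Σ` wherever
`λ₁² cos² t + λ₂² sin² t > 0`; by Takahashi's theorem it parameterizes a minimal
surface in `𝕊³` (Lawson's ruled minimal surface). -/
theorem lawson_ruled_surface_takahashi (lam1 lam2 : ℝ) (hlam : (lam1, lam2) ≠ (0, 0))
    (S : EuclideanSpace ℝ (Fin 2) → EuclideanSpace ℝ (Fin 4))
    (hS0 : ∀ q, S q 0 = Real.cos (q 0) * Real.cos (lam1 * q 1))
    (hS1 : ∀ q, S q 1 = Real.cos (q 0) * Real.sin (lam1 * q 1))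
    (hS2 : ∀ q, S q 2 = Real.sin (q 0) * Real.cos (lam2 * q 1))
    (hS3 : ∀ q, S q 3 = Real.sin (q 0) * Real.sin (lam2 * q 1))
    (g : EuclideanSpace ℝ (Fin 2) → Matrix (Fin 2) (Fin 2) ℝ)
    (hg : ∀ q a b, g q a b = @inner ℝ _ _ (pd a S q) (pd b S q)) :
    ∀ q : EuclideanSpace ℝ (Fin 2),
      0 < lam1 ^ 2 * Real.cos (q 0) ^ 2 + lam2 ^ 2 * Real.sin (q 0) ^ 2 →
      ∑ a, ∑ b, pd a (fun q' => (Real.sqrt (g q').det * (g q')⁻¹ a b) • pd b S q') q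
        = (-(2 * Real.sqrt (g q).det)) • S q := by
  have hSf : S = Sf lam1 lam2 := by
    funext p
    ext j
    fin_cases j <;>
      simp [Sf, vmk_apply, sv, hS0 p, hS1 p, hS2 p, hS3 p]
  subst hSf
  have hgmat := metric_eq lam1 lam2 g hg
  have hdet : ∀ p, (g p).det = w1 lam1 lam2 (p 0) := fun p => by
    rw [hgmat p]; simp [Matrix.det_fin_two_of]
  have hp0c : Continuous fun p : EuclideanSpace ℝ (Fin 2) => p 0 := by
    simpa only [show ⇑(EuclideanSpace.proj (𝕜 := ℝ) (0 : Fin 2))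
        = fun p : EuclideanSpace ℝ (Fin 2) => p 0
        from funext fun p => PiLp.proj_apply 2 (fun _ : Fin 2 => ℝ) 0 p]
      using (EuclideanSpace.proj (𝕜 := ℝ) (0 : Fin 2)).continuous
  have hcont : Continuous fun p : EuclideanSpace ℝ (Fin 2) => w1 lam1 lam2 (p 0) := by
    simp only [w1]
    exact (continuous_const.mul ((Real.continuous_cos.comp hp0c).pow 2)).add
      (continuous_const.mul ((Real.continuous_sin.comp hp0c).pow 2))
  intro q hq
  have hW : 0 < w1 lam1 lam2 (q 0) := by simpa [w1] using hq
  have hr : 0 < Real.sqrt (w1 lam1 lam2 (q 0)) := Real.sqrt_pos.2 hW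
  have hev : ∀ᶠ p in nhds q, 0 < w1 lam1 lam2 (p 0) :=
    hcont.continuousAt.eventually (eventually_gt_nhds hW)
  -- term (0,0)
  have hA00 : (fun q' => (Real.sqrt (g q').det * (g q')⁻¹ 0 0) • pd 0 (Sf lam1 lam2) q')
      =ᶠ[nhds q] (fun p => vmk
        ![(Real.sqrt (w1 lam1 lam2 (p 0)) * -Real.sin (p 0)) * Real.cos (lam1 * p 1),
          (Real.sqrt (w1 lam1 lam2 (p 0)) * -Real.sin (p 0)) * Real.sin (lam1 * p 1),
          (Real.sqrt (w1 lam1 lam2 (p 0)) * Real.cos (p 0)) * Real.cos (lam2 * p 1),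
          (Real.sqrt (w1 lam1 lam2 (p 0)) * Real.cos (p 0)) * Real.sin (lam2 * p 1)]) := by
    filter_upwards [hev] with p hp
    rw [hdet p, hgmat p, inv2 _ hp.ne', pdSf0]
    ext j
    fin_cases j <;> simp [vmk_apply, vt] <;> ring
  have hp00 : pd 0 (fun q' => (Real.sqrt (g q').det * (g q')⁻¹ 0 0) • pd 0 (Sf lam1 lam2) q') q
      = vmk ![((lam2 ^ 2 - lam1 ^ 2) * Real.sin (q 0) * Real.cos (q 0) / Real.sqrt (w1 lam1 lam2 (q 0)) * (-Real.sin (q 0))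
                + Real.sqrt (w1 lam1 lam2 (q 0)) * (-Real.cos (q 0))) * Real.cos (lam1 * q 1),
              ((lam2 ^ 2 - lam1 ^ 2) * Real.sin (q 0) * Real.cos (q 0) / Real.sqrt (w1 lam1 lam2 (q 0)) * (-Real.sin (q 0))
                + Real.sqrt (w1 lam1 lam2 (q 0)) * (-Real.cos (q 0))) * Real.sin (lam1 * q 1),
              ((lam2 ^ 2 - lam1 ^ 2) * Real.sin (q 0) * Real.cos (q 0) / Real.sqrt (w1 lam1 lam2 (q 0)) * Real.cos (q 0)
                + Real.sqrt (w1 lam1 lam2 (q 0)) * (-Real.sin (q 0))) * Real.cos (lam2 * q 1),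
              ((lam2 ^ 2 - lam1 ^ 2) * Real.sin (q 0) * Real.cos (q 0) / Real.sqrt (w1 lam1 lam2 (q 0)) * Real.cos (q 0)
                + Real.sqrt (w1 lam1 lam2 (q 0)) * (-Real.sin (q 0))) * Real.sin (lam2 * q 1)] := by
    rw [pd_congr hA00 0]
    apply pd_vmk
    intro i
    fin_cases i
    · exact ⟨_, hasFDerivAt_sep q
        (((Real.hasDerivAt_sqrt hW.ne').comp (q 0) (hd_w1 lam1 lam2 (q 0))).mul
          (Real.hasDerivAt_sin (q 0)).neg) (hd_cosl lam1 (q 1)),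
        by simp only [ContinuousLinearMap.add_apply, ContinuousLinearMap.coe_smul', Pi.smul_apply,
          PiLp.proj_apply, EuclideanSpace.single_apply, smul_eq_mul, reduceIte, Fin.isValue,
          one_ne_zero, zero_ne_one, if_false, if_true, Function.comp_apply, Fin.zero_eta, Fin.mk_one,
          Matrix.cons_val_zero, Matrix.cons_val_one, Matrix.head_cons, Matrix.cons_val_two,
          Matrix.tail_cons, Matrix.cons_val_three, Fin.reduceFinMk, Pi.neg_apply]; ring⟩
    · exact ⟨_, hasFDerivAt_sep q
        (((Real.hasDerivAt_sqrt hW.ne').comp (q 0) (hd_w1 lam1 lam2 (q 0))).mul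
          (Real.hasDerivAt_sin (q 0)).neg) (hd_sinl lam1 (q 1)),
        by simp only [ContinuousLinearMap.add_apply, ContinuousLinearMap.coe_smul', Pi.smul_apply,
          PiLp.proj_apply, EuclideanSpace.single_apply, smul_eq_mul, reduceIte, Fin.isValue,
          one_ne_zero, zero_ne_one, if_false, if_true, Function.comp_apply, Fin.zero_eta, Fin.mk_one,
          Matrix.cons_val_zero, Matrix.cons_val_one, Matrix.head_cons, Matrix.cons_val_two,
          Matrix.tail_cons, Matrix.cons_val_three, Fin.reduceFinMk, Pi.neg_apply]; ring⟩
    · exact ⟨_, hasFDerivAt_sep q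
        (((Real.hasDerivAt_sqrt hW.ne').comp (q 0) (hd_w1 lam1 lam2 (q 0))).mul
          (Real.hasDerivAt_cos (q 0))) (hd_cosl lam2 (q 1)),
        by simp only [ContinuousLinearMap.add_apply, ContinuousLinearMap.coe_smul', Pi.smul_apply,
          PiLp.proj_apply, EuclideanSpace.single_apply, smul_eq_mul, reduceIte, Fin.isValue,
          one_ne_zero, zero_ne_one, if_false, if_true, Function.comp_apply, Fin.zero_eta, Fin.mk_one,
          Matrix.cons_val_zero, Matrix.cons_val_one, Matrix.head_cons, Matrix.cons_val_two,
          Matrix.tail_cons, Matrix.cons_val_three, Fin.reduceFinMk, Pi.neg_apply]; ring⟩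
    · exact ⟨_, hasFDerivAt_sep q
        (((Real.hasDerivAt_sqrt hW.ne').comp (q 0) (hd_w1 lam1 lam2 (q 0))).mul
          (Real.hasDerivAt_cos (q 0))) (hd_sinl lam2 (q 1)),
        by simp only [ContinuousLinearMap.add_apply, ContinuousLinearMap.coe_smul', Pi.smul_apply,
          PiLp.proj_apply, EuclideanSpace.single_apply, smul_eq_mul, reduceIte, Fin.isValue,
          one_ne_zero, zero_ne_one, if_false, if_true, Function.comp_apply, Fin.zero_eta, Fin.mk_one,
          Matrix.cons_val_zero, Matrix.cons_val_one, Matrix.head_cons, Matrix.cons_val_two,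
          Matrix.tail_cons, Matrix.cons_val_three, Fin.reduceFinMk, Pi.neg_apply]; ring⟩
  -- zero terms
  have hA01 : (fun q' => (Real.sqrt (g q').det * (g q')⁻¹ 0 1) • pd 1 (Sf lam1 lam2) q')
      =ᶠ[nhds q] (fun _ => (0 : EuclideanSpace ℝ (Fin 4))) := by
    filter_upwards [hev] with p hp
    rw [hdet p, hgmat p, inv2 _ hp.ne']
    simp
  have hA10 : (fun q' => (Real.sqrt (g q').det * (g q')⁻¹ 1 0) • pd 0 (Sf lam1 lam2) q')
      =ᶠ[nhds q] (fun _ => (0 : EuclideanSpace ℝ (Fin 4))) := by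
    filter_upwards [hev] with p hp
    rw [hdet p, hgmat p, inv2 _ hp.ne']
    simp
  have hp01 : pd 0 (fun q' => (Real.sqrt (g q').det * (g q')⁻¹ 0 1) • pd 1 (Sf lam1 lam2) q') q = 0 := by
    rw [pd_congr hA01 0, pd_zero]
  have hp10 : pd 1 (fun q' => (Real.sqrt (g q').det * (g q')⁻¹ 1 0) • pd 0 (Sf lam1 lam2) q') q = 0 := by
    rw [pd_congr hA10 1, pd_zero]
  -- term (1,1)
  have hA11 : (fun q' => (Real.sqrt (g q').det * (g q')⁻¹ 1 1) • pd 1 (Sf lam1 lam2) q')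
      =ᶠ[nhds q] (fun p => vmk
        ![(Real.sqrt (w1 lam1 lam2 (p 0)) * (w1 lam1 lam2 (p 0))⁻¹ * Real.cos (p 0)) * -(lam1 * Real.sin (lam1 * p 1)),
          (Real.sqrt (w1 lam1 lam2 (p 0)) * (w1 lam1 lam2 (p 0))⁻¹ * Real.cos (p 0)) * (lam1 * Real.cos (lam1 * p 1)),
          (Real.sqrt (w1 lam1 lam2 (p 0)) * (w1 lam1 lam2 (p 0))⁻¹ * Real.sin (p 0)) * -(lam2 * Real.sin (lam2 * p 1)),
          (Real.sqrt (w1 lam1 lam2 (p 0)) * (w1 lam1 lam2 (p 0))⁻¹ * Real.sin (p 0)) * (lam2 * Real.cos (lam2 * p 1))]) := by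
    filter_upwards [hev] with p hp
    rw [hdet p, hgmat p, inv2 _ hp.ne', pdSf1]
    ext j
    fin_cases j <;> simp [vmk_apply, vh] <;> ring
  have hp11 : pd 1 (fun q' => (Real.sqrt (g q').det * (g q')⁻¹ 1 1) • pd 1 (Sf lam1 lam2) q') q
      = vmk ![-(Real.sqrt (w1 lam1 lam2 (q 0)) * (w1 lam1 lam2 (q 0))⁻¹ * Real.cos (q 0) * lam1 ^ 2 * Real.cos (lam1 * q 1)),
              -(Real.sqrt (w1 lam1 lam2 (q 0)) * (w1 lam1 lam2 (q 0))⁻¹ * Real.cos (q 0) * lam1 ^ 2 * Real.sin (lam1 * q 1)),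
              -(Real.sqrt (w1 lam1 lam2 (q 0)) * (w1 lam1 lam2 (q 0))⁻¹ * Real.sin (q 0) * lam2 ^ 2 * Real.cos (lam2 * q 1)),
              -(Real.sqrt (w1 lam1 lam2 (q 0)) * (w1 lam1 lam2 (q 0))⁻¹ * Real.sin (q 0) * lam2 ^ 2 * Real.sin (lam2 * q 1))] := by
    rw [pd_congr hA11 1]
    apply pd_vmk
    intro i
    fin_cases i
    · exact ⟨_, hasFDerivAt_sep q
        ((((Real.hasDerivAt_sqrt hW.ne').comp (q 0) (hd_w1 lam1 lam2 (q 0))).mul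
          ((hd_w1 lam1 lam2 (q 0)).inv hW.ne')).mul (Real.hasDerivAt_cos (q 0)))
        ((hd_sinl lam1 (q 1)).const_mul lam1).neg,
        by simp only [ContinuousLinearMap.add_apply, ContinuousLinearMap.coe_smul', Pi.smul_apply,
          PiLp.proj_apply, EuclideanSpace.single_apply, smul_eq_mul, reduceIte, Fin.isValue,
          one_ne_zero, zero_ne_one, if_false, if_true, Function.comp_apply, Fin.zero_eta, Fin.mk_one,
          Matrix.cons_val_zero, Matrix.cons_val_one, Matrix.head_cons, Matrix.cons_val_two,
          Matrix.tail_cons, Matrix.cons_val_three, Fin.reduceFinMk, Pi.mul_apply, Pi.inv_apply]; ring⟩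
    · exact ⟨_, hasFDerivAt_sep q
        ((((Real.hasDerivAt_sqrt hW.ne').comp (q 0) (hd_w1 lam1 lam2 (q 0))).mul
          ((hd_w1 lam1 lam2 (q 0)).inv hW.ne')).mul (Real.hasDerivAt_cos (q 0)))
        ((hd_cosl lam1 (q 1)).const_mul lam1),
        by simp only [ContinuousLinearMap.add_apply, ContinuousLinearMap.coe_smul', Pi.smul_apply,
          PiLp.proj_apply, EuclideanSpace.single_apply, smul_eq_mul, reduceIte, Fin.isValue,
          one_ne_zero, zero_ne_one, if_false, if_true, Function.comp_apply, Fin.zero_eta, Fin.mk_one,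
          Matrix.cons_val_zero, Matrix.cons_val_one, Matrix.head_cons, Matrix.cons_val_two,
          Matrix.tail_cons, Matrix.cons_val_three, Fin.reduceFinMk, Pi.mul_apply, Pi.inv_apply]; ring⟩
    · exact ⟨_, hasFDerivAt_sep q
        ((((Real.hasDerivAt_sqrt hW.ne').comp (q 0) (hd_w1 lam1 lam2 (q 0))).mul
          ((hd_w1 lam1 lam2 (q 0)).inv hW.ne')).mul (Real.hasDerivAt_sin (q 0)))
        ((hd_sinl lam2 (q 1)).const_mul lam2).neg,
        by simp only [ContinuousLinearMap.add_apply, ContinuousLinearMap.coe_smul', Pi.smul_apply,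
          PiLp.proj_apply, EuclideanSpace.single_apply, smul_eq_mul, reduceIte, Fin.isValue,
          one_ne_zero, zero_ne_one, if_false, if_true, Function.comp_apply, Fin.zero_eta, Fin.mk_one,
          Matrix.cons_val_zero, Matrix.cons_val_one, Matrix.head_cons, Matrix.cons_val_two,
          Matrix.tail_cons, Matrix.cons_val_three, Fin.reduceFinMk, Pi.mul_apply, Pi.inv_apply]; ring⟩
    · exact ⟨_, hasFDerivAt_sep q
        ((((Real.hasDerivAt_sqrt hW.ne').comp (q 0) (hd_w1 lam1 lam2 (q 0))).mul
          ((hd_w1 lam1 lam2 (q 0)).inv hW.ne')).mul (Real.hasDerivAt_sin (q 0)))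
        ((hd_cosl lam2 (q 1)).const_mul lam2),
        by simp only [ContinuousLinearMap.add_apply, ContinuousLinearMap.coe_smul', Pi.smul_apply,
          PiLp.proj_apply, EuclideanSpace.single_apply, smul_eq_mul, reduceIte, Fin.isValue,
          one_ne_zero, zero_ne_one, if_false, if_true, Function.comp_apply, Fin.zero_eta, Fin.mk_one,
          Matrix.cons_val_zero, Matrix.cons_val_one, Matrix.head_cons, Matrix.cons_val_two,
          Matrix.tail_cons, Matrix.cons_val_three, Fin.reduceFinMk, Pi.mul_apply, Pi.inv_apply]; ring⟩
  simp only [Fin.sum_univ_two]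
  rw [hp00, hp01, hp10, hp11, hdet q]
  have hr2 : Real.sqrt (w1 lam1 lam2 (q 0)) ^ 2 = w1 lam1 lam2 (q 0) := Real.sq_sqrt hW.le
  have h0 := Real.sin_sq_add_cos_sq (q 0)
  set r := Real.sqrt (w1 lam1 lam2 (q 0)) with hrdef
  simp only [w1] at hr2 ⊢
  ext j
  fin_cases j
  · simp [Sf, vmk_apply, sv, w1]
    rw [← hr2]
    field_simp
    linear_combination (Real.cos (lam1 * q 1) * Real.cos (q 0)) * hr2
      + (Real.cos (lam1 * q 1) * Real.cos (q 0) * lam1 ^ 2) * h0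
  · simp [Sf, vmk_apply, sv, w1]
    rw [← hr2]
    field_simp
    linear_combination (Real.sin (lam1 * q 1) * Real.cos (q 0)) * hr2
      + (Real.sin (lam1 * q 1) * Real.cos (q 0) * lam1 ^ 2) * h0
  · simp [Sf, vmk_apply, sv, w1]
    rw [← hr2]
    field_simp
    linear_combination (Real.cos (lam2 * q 1) * Real.sin (q 0)) * hr2
      + (Real.cos (lam2 * q 1) * Real.sin (q 0) * lam2 ^ 2) * h0
  · simp [Sf, vmk_apply, sv, w1]
    rw [← hr2]
    field_simp
    linear_combination (Real.sin (lam2 * q 1) * Real.sin (q 0)) * hr2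
      + (Real.sin (lam2 * q 1) * Real.sin (q 0) * lam2 ^ 2) * h0
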